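/- A connected graph G on n vertices is resistance regular if and only if the quantity (1/deg(v_i)) ( Σ_{v_j ∈ N(v_i)} L†_ij + 1 − 1/n ) is the same for every vertex v_i. -/

import Mathlib

open Matrix BigOperators Finset

noncomputable def allOnes (V : Type*) : Matrix V V ℝ := Matrix.of fun _ _ => 1

/-- The resistance distance matrix of a connected graph, via the matrix
`X = (L + (1/n)J)⁻¹`: `r_ij = X_ii + X_jj - 2X_ij`. -/
noncomputable def resistMatrix {V : Type*} [Fintype V] [DecidableEq V]
    (G : SimpleGraph V) [DecidableRel G.Adj] : Matrix V V ℝ :=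
  Matrix.of fun i j =>
    (G.lapMatrix ℝ + (Fintype.card V : ℝ)⁻¹ • allOnes V)⁻¹ i i +
    (G.lapMatrix ℝ + (Fintype.card V : ℝ)⁻¹ • allOnes V)⁻¹ j j -
    2 * (G.lapMatrix ℝ + (Fintype.card V : ℝ)⁻¹ • allOnes V)⁻¹ i j

/-- `W` is the Moore-Penrose inverse of `L`. -/
def IsMoorePenrose {V : Type*} [Fintype V] [DecidableEq V] (L W : Matrix V V ℝ) : Prop :=
  L * W * L = L ∧ W * L * W = W ∧ (L * W)ᵀ = L * W ∧ (W * L)ᵀ = W * L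

section Aux

variable {V : Type*} [Fintype V] [DecidableEq V] (G : SimpleGraph V) [DecidableRel G.Adj]

lemma lap_ker_const (hG : G.Connected) (x : V → ℝ) (hx : G.lapMatrix ℝ *ᵥ x = 0) (i j : V) :
    x i = x j := by
  have := G.lapMatrix_mulVec_eq_zero_iff_forall_reachable.mp hx
  exact this i j (hG.preconnected i j)

lemma LW_mulVec_one (W : Matrix V V ℝ) (hW : IsMoorePenrose (G.lapMatrix ℝ) W) :
    (G.lapMatrix ℝ * W) *ᵥ (fun _ => 1) = 0 := by
  rw [← hW.2.2.1, transpose_mul, (G.isSymm_lapMatrix ℝ).eq, ← mulVec_mulVec,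
    G.lapMatrix_mulVec_const_eq_zero, mulVec_zero]

lemma W_mulVec_one (hG : G.Connected) (W : Matrix V V ℝ)
    (hW : IsMoorePenrose (G.lapMatrix ℝ) W) : W *ᵥ (fun _ => 1) = 0 := by
  have h0 : G.lapMatrix ℝ *ᵥ (W *ᵥ (fun _ => 1)) = 0 := by
    rw [mulVec_mulVec]; exact LW_mulVec_one G W hW
  obtain ⟨i₀⟩ := hG.nonempty
  have hc : W *ᵥ (fun _ => 1) = fun _ => (W *ᵥ (fun _ => 1)) i₀ :=
    funext fun i => lap_ker_const G hG _ h0 i i₀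
  set c := (W *ᵥ (fun _ => 1)) i₀ with hcdef
  have hLc : G.lapMatrix ℝ *ᵥ (fun _ => c) = 0 := by
    have : (fun _ => c) = c • (fun (_ : V) => (1:ℝ)) := by funext; simp
    rw [this, mulVec_smul, G.lapMatrix_mulVec_const_eq_zero, smul_zero]
  calc W *ᵥ (fun _ => 1) = (W * G.lapMatrix ℝ * W) *ᵥ (fun _ => 1) := by rw [hW.2.1]
    _ = W *ᵥ (G.lapMatrix ℝ *ᵥ (W *ᵥ (fun _ => 1))) := by rw [← mulVec_mulVec, ← mulVec_mulVec]
    _ = W *ᵥ (G.lapMatrix ℝ *ᵥ (fun _ => c)) := by rw [← hc]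
    _ = 0 := by rw [hLc, mulVec_zero]

lemma WL_diag (hG : G.Connected) (W : Matrix V V ℝ)
    (hW : IsMoorePenrose (G.lapMatrix ℝ) W) (i : V) :
    (W * G.lapMatrix ℝ) i i = 1 - (Fintype.card V : ℝ)⁻¹ := by
  set L := G.lapMatrix ℝ with hL
  set K := W * L with hK
  have hLK : L * K = L := by rw [hK, ← Matrix.mul_assoc]; exact hW.1
  -- column constancy
  have hcol : ∀ c a b : V, K a c - (if a = c then (1:ℝ) else 0)
      = K b c - (if b = c then (1:ℝ) else 0) := by
    intro c a b
    apply lap_ker_const G hG (fun r => K r c - (if r = c then (1:ℝ) else 0))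
    funext r
    have h1 : ∑ k, L r k * K k c = L r c := by
      have := congrArg (fun M => M r c) hLK
      simpa [Matrix.mul_apply] using this
    have h2 : ∑ k, L r k * (if k = c then (1:ℝ) else 0) = L r c := by
      simp [mul_ite]
    simp only [mulVec, dotProduct, Pi.zero_apply, mul_sub]
    rw [Finset.sum_sub_distrib, h1, h2, sub_self]
  -- symmetry
  have hsym : ∀ a b : V, K a b = K b a := by
    intro a b
    have := congrArg (fun M => M b a) hW.2.2.2
    simpa [Matrix.transpose_apply] using this
  -- row sum zero
  have hrow : ∑ k, K i k = 0 := by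
    have h0 : K *ᵥ (fun _ => 1) = 0 := by
      rw [hK, ← mulVec_mulVec, G.lapMatrix_mulVec_const_eq_zero, mulVec_zero]
    have := congrFun h0 i
    simpa [mulVec, dotProduct] using this
  have hentry : ∀ k, K i k = K i i - 1 + (if k = i then (1:ℝ) else 0) := by
    intro k
    by_cases hk : k = i
    · subst hk; simp
    · have h1 := hcol i k i
      rw [if_pos rfl, if_neg hk] at h1
      rw [if_neg hk, hsym i k]
      linarith
  have hsum : ∑ k, K i k = (Fintype.card V : ℝ) * (K i i - 1) + 1 := by
    rw [Finset.sum_congr rfl (fun k _ => hentry k), Finset.sum_add_distrib,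
      Finset.sum_const, Finset.card_univ, nsmul_eq_mul]
    simp
  have hn : (Fintype.card V : ℝ) ≠ 0 := by
    have := Fintype.card_pos_iff.mpr hG.nonempty
    positivity
  rw [hrow] at hsum
  field_simp at hsum ⊢
  linarith

lemma neighbor_sum_eq (hG : G.Connected) (W : Matrix V V ℝ)
    (hW : IsMoorePenrose (G.lapMatrix ℝ) W) (i : V) :
    (∑ k ∈ G.neighborFinset i, W i k) + 1 - (Fintype.card V : ℝ)⁻¹
      = (G.degree i : ℝ) * W i i := by
  have hd := WL_diag G hG W hW i
  rw [Matrix.mul_apply] at hd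
  have hform : ∀ k, W i k * G.lapMatrix ℝ k i
      = (if k = i then (G.degree i : ℝ) * W i i else 0)
        - (if k ∈ G.neighborFinset i then W i k else 0) := by
    intro k
    simp only [SimpleGraph.lapMatrix, Matrix.sub_apply, SimpleGraph.degMatrix,
      Matrix.of_apply, SimpleGraph.adjMatrix_apply, SimpleGraph.mem_neighborFinset]
    by_cases h : k = i
    · subst h
      simp [SimpleGraph.irrefl]
      ring
    · have : ¬ G.Adj i i := G.irrefl
      simp only [if_neg h]
      by_cases ha : G.Adj k i
      · simp [ha, G.adj_comm i k |>.mpr ha, mul_comm, Matrix.diagonal_apply_ne _ h]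
      · have hik : ¬ G.Adj i k := fun hik => ha ((G.adj_comm i k).mp hik)
        simp [ha, hik, Matrix.diagonal_apply_ne _ h]
  rw [Finset.sum_congr rfl (fun k _ => hform k), Finset.sum_sub_distrib] at hd
  simp only [Finset.sum_ite_eq', Finset.mem_univ, if_pos] at hd
  rw [Finset.sum_ite_mem, Finset.univ_inter] at hd
  linarith

end Aux

theorem resistanceRegular_iff_neighborhood_quantity_const
    {V : Type*} [Fintype V] [DecidableEq V] (G : SimpleGraph V) [DecidableRel G.Adj]
    (hG : G.Connected) (W : Matrix V V ℝ) (hW : IsMoorePenrose (G.lapMatrix ℝ) W) :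
    (∀ i j : V, ∑ k, (W i i + W k k - 2 * W i k) = ∑ k, (W j j + W k k - 2 * W j k)) ↔
      (∀ i j : V,
        (G.degree i : ℝ)⁻¹ * ((∑ k ∈ G.neighborFinset i, W i k) + 1 - (Fintype.card V : ℝ)⁻¹) =
        (G.degree j : ℝ)⁻¹ * ((∑ k ∈ G.neighborFinset j, W j k) + 1 - (Fintype.card V : ℝ)⁻¹)) := by
  have hn : (0:ℝ) < (Fintype.card V : ℝ) := by
    exact_mod_cast Fintype.card_pos_iff.mpr hG.nonempty
  have hrowzero : ∀ i : V, ∑ k, W i k = 0 := by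
    intro i
    have := congrFun (W_mulVec_one G hG W hW) i
    simpa [mulVec, dotProduct] using this
  have hLHS : ∀ i : V, ∑ k, (W i i + W k k - 2 * W i k)
      = (Fintype.card V : ℝ) * W i i + ∑ k, W k k := by
    intro i
    rw [Finset.sum_sub_distrib, Finset.sum_add_distrib, ← Finset.mul_sum, hrowzero i,
      Finset.sum_const, Finset.card_univ, nsmul_eq_mul]
    ring
  have hL : (∀ i j : V, ∑ k, (W i i + W k k - 2 * W i k) = ∑ k, (W j j + W k k - 2 * W j k))
      ↔ ∀ i j : V, W i i = W j j := by
    constructor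
    · intro h i j
      have := h i j
      rw [hLHS i, hLHS j] at this
      have h2 : (Fintype.card V : ℝ) * W i i = (Fintype.card V : ℝ) * W j j := by linarith
      exact mul_left_cancel₀ hn.ne' h2
    · intro h i j
      rw [hLHS i, hLHS j, h i j]
  rw [hL]
  by_cases hcard : Fintype.card V ≤ 1
  · have hsub : ∀ i j : V, i = j := fun i j =>
      Fintype.card_le_one_iff.mp hcard i j
    constructor <;> intro _ i j <;> rw [hsub i j]
  · push_neg at hcard
    have hdeg : ∀ i : V, (G.degree i : ℝ) ≠ 0 := by
      intro i
      have : 0 < G.degree i := by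
        rw [G.degree_pos_iff_exists_adj]
        obtain ⟨w, hw⟩ := Fintype.exists_ne_of_one_lt_card hcard i
        obtain ⟨p⟩ := hG.preconnected i w
        cases p with
        | nil => exact absurd rfl hw.symm
        | cons h q => exact ⟨_, h⟩
      exact_mod_cast this.ne'
    have hq : ∀ i : V, (G.degree i : ℝ)⁻¹ *
        ((∑ k ∈ G.neighborFinset i, W i k) + 1 - (Fintype.card V : ℝ)⁻¹) = W i i := by
      intro i
      rw [neighbor_sum_eq G hG W hW i, inv_mul_cancel_left₀ (hdeg i)]
    constructor
    · intro h i j; rw [hq i, hq j]; exact h i j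
    · intro h i j; have := h i j; rwa [hq i, hq j] at this
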